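/- Let H be an induced subgraph of a finite simple graph G, and let u and v be adjacent vertices of G with v ∉ V(H). If u and v are twins in the subgraph of G induced by V(H) ∪ {u, v}, then G is not H-pivot-unique. -/

import Mathlib

/-!  Basic notions: local complementation, edge pivot, pivot-equivalence, pivot-minors. -/

variable {V : Type*} {W : Type*}

/-- Local complementation at a vertex `u`: complement the adjacency inside the
neighbourhood of `u`. -/
def localComp (G : SimpleGraph V) (u : V) : SimpleGraph V where
  Adj x y := x ≠ y ∧
    ((G.Adj u x ∧ G.Adj u y ∧ ¬ G.Adj x y) ∨ (¬ (G.Adj u x ∧ G.Adj u y) ∧ G.Adj x y))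
  symm := by
    constructor
    intro x y h
    obtain ⟨hne, h⟩ := h
    refine ⟨hne.symm, ?_⟩
    rw [G.adj_comm y x]
    tauto
  loopless := by
    constructor
    intro x h
    exact h.1 rfl

/-- The edge pivot `G ∧ uv = ((G * u) * v) * u`. -/
def pivotEdge (G : SimpleGraph V) (u v : V) : SimpleGraph V :=
  localComp (localComp (localComp G u) v) u

/-- One pivot step: pivoting along an edge of the graph. -/
def PivotStep (G G' : SimpleGraph V) : Prop :=
  ∃ u v, G.Adj u v ∧ G' = pivotEdge G u v

/-- Two graphs on the same vertex set are pivot-equivalent if one can be obtained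
from the other by a sequence of edge pivots. -/
def PivotEquiv (G G' : SimpleGraph V) : Prop :=
  Relation.ReflTransGen PivotStep G G'

/-- `H` is a pivot-minor of `G` on the vertex subset `s`: `H` is obtained (up to
isomorphism) from `G` by a sequence of edge pivots and deletions of the vertices
outside `s`.  Since pivoting an edge commutes with deleting a vertex not on that
edge, this is equivalent to performing all the edge pivots first and then deleting
the vertices outside `s`, which is how we state it. -/
def HasPivotMinorOn (G : SimpleGraph V) (s : Set V) (H : SimpleGraph W) : Prop :=
  ∃ G' : SimpleGraph V, PivotEquiv G G' ∧ Nonempty ((G'.induce s) ≃g H)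

/-- `G` contains a pivot-minor isomorphic to `H`. -/
def HasPivotMinor (G : SimpleGraph V) (H : SimpleGraph W) : Prop :=
  ∃ s : Set V, HasPivotMinorOn G s H

/-- `G'` is a result of contracting the vertex `v` in `G` (denoted `G/v`):
if `v` is isolated this is `G - v`, and otherwise it is `(G ∧ zv) - v`
for some neighbour `z` of `v` (well defined up to pivot-equivalence). -/
def IsContraction (G : SimpleGraph V) (v : V) (G' : SimpleGraph ↥{u : V | u ≠ v}) : Prop :=
  ((∀ z, ¬ G.Adj v z) ∧ G' = G.induce {u : V | u ≠ v}) ∨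
    (∃ z, G.Adj v z ∧ G' = (pivotEdge G z v).induce {u : V | u ≠ v})

/-- `G` is `H`-pivot-unique: `G` contains a pivot-minor isomorphic to `H` and for
every vertex `v`, at most one of `G - v` and `G / v` contains a pivot-minor
isomorphic to `H`. -/
def PivotUnique (G : SimpleGraph V) (H : SimpleGraph W) : Prop :=
  HasPivotMinor G H ∧
    ∀ v : V, ¬ (HasPivotMinor (G.induce {u : V | u ≠ v}) H ∧
      ∃ G' : SimpleGraph ↥{u : V | u ≠ v}, IsContraction G v G' ∧ HasPivotMinor G' H)

/-- `G` contains an induced subgraph isomorphic to `H`. -/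
def HasInducedSubgraphIso (G : SimpleGraph V) (H : SimpleGraph W) : Prop :=
  ∃ s : Set V, Nonempty ((G.induce s) ≃g H)

section Aux

variable {V : Type*}

/-- If pivoting `uv` does not change adjacency inside `s`, and `v ∉ s`, then
the double induce is isomorphic to `G.induce s`. -/
lemma localComp_adj (G : SimpleGraph V) (u x y : V) :
    (localComp G u).Adj x y ↔ x ≠ y ∧
      ((G.Adj u x ∧ G.Adj u y ∧ ¬ G.Adj x y) ∨ (¬ (G.Adj u x ∧ G.Adj u y) ∧ G.Adj x y)) :=
  Iff.rfl

noncomputable def nestedInduceIso (G K : SimpleGraph V) (s : Set V) (v : V) (hv : v ∉ s)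
    (hK : ∀ x ∈ s, ∀ y ∈ s, K.Adj x y ↔ G.Adj x y) :
    ((K.induce {w : V | w ≠ v}).induce (Subtype.val ⁻¹' s)) ≃g G.induce s where
  toFun x := ⟨x.1.1, x.2⟩
  invFun y := ⟨⟨y.1, fun h => hv (h ▸ y.2)⟩, y.2⟩
  left_inv := fun _ => rfl
  right_inv := fun _ => rfl
  map_rel_iff' := by
    intro a b
    exact (hK a.1.1 a.2 b.1.1 b.2).symm

set_option maxHeartbeats 2000000 in
lemma pivot_adj_of_twins (G : SimpleGraph V) (s : Set V) (u v : V)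
    (huv : G.Adj u v) (hv : v ∉ s)
    (htwin : ∀ w ∈ s ∪ {u, v}, w ≠ u → w ≠ v → (G.Adj u w ↔ G.Adj v w)) :
    ∀ x ∈ s, ∀ y ∈ s, (pivotEdge G u v).Adj x y ↔ G.Adj x y := by
  intro x hx y hy
  have hvu : G.Adj v u := huv.symm
  have huu : ¬ G.Adj u u := G.loopless.irrefl u
  have hvv : ¬ G.Adj v v := G.loopless.irrefl v
  have hnuv : u ≠ v := huv.ne
  have hvx : v ≠ x := fun h => hv (h ▸ hx)
  have hvy : v ≠ y := fun h => hv (h ▸ hy)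
  by_cases hxy : x = y
  · subst hxy
    simp [localComp_adj, pivotEdge]
  · by_cases hux : u = x
    · subst hux
      have hty : G.Adj u y ↔ G.Adj v y := htwin y (Or.inl hy) (fun h => hxy h.symm) (fun h => hvy h.symm)
      have hyu : G.Adj y u ↔ G.Adj u y := G.adj_comm y u
      have hyv : G.Adj y v ↔ G.Adj v y := G.adj_comm y v
      have hvu' : v ≠ u := Ne.symm hnuv
      rw [pivotEdge]; simp only [localComp_adj]
      simp [hty, hyu, hyv, hxy, hvy, hvu', huv, hvu, huu, hvv, hnuv]
      try tauto
    · by_cases huy : u = y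
      · subst huy
        have htx : G.Adj u x ↔ G.Adj v x := htwin x (Or.inl hx) (fun h => hux h.symm) (fun h => hvx h.symm)
        have hxu : G.Adj x u ↔ G.Adj u x := G.adj_comm x u
        have hxv : G.Adj x v ↔ G.Adj v x := G.adj_comm x v
        have hvu' : v ≠ u := Ne.symm hnuv
        rw [pivotEdge]; simp only [localComp_adj]
        simp [htx, hxu, hxv, hxy, hvx, hvu', huv, hvu, huu, hvv, hnuv, hux]
        try tauto
      · have htx : G.Adj u x ↔ G.Adj v x := htwin x (Or.inl hx) (fun h => hux h.symm) (fun h => hvx h.symm)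
        have hty : G.Adj u y ↔ G.Adj v y := htwin y (Or.inl hy) (fun h => huy h.symm) (fun h => hvy h.symm)
        have hvu' : v ≠ u := Ne.symm hnuv
        rw [pivotEdge]; simp only [localComp_adj]
        simp [htx, hty, hxy, hux, huy, hvx, hvy, hvu', huv, hvu, huu, hvv, hnuv]
        try tauto

end Aux

/-- Let `H = G[s]` be an induced subgraph of `G` and let `u, v` be
adjacent vertices of `G` with `v ∉ s`. If `u` and `v` are twins in the subgraph of
`G` induced by `s ∪ {u, v}`, then `G` is not `H`-pivot-unique. -/
theorem not_pivotUnique_of_twins {V : Type*} [Fintype V] (G : SimpleGraph V)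
    (s : Set V) (u v : V) (huv : G.Adj u v) (hv : v ∉ s)
    (htwin : ∀ w ∈ s ∪ {u, v}, w ≠ u → w ≠ v → (G.Adj u w ↔ G.Adj v w)) :
    ¬ PivotUnique G (G.induce s) := by
  rintro ⟨-, hforall⟩
  apply hforall v
  have hKadj := pivot_adj_of_twins G s u v huv hv htwin
  have hGadj : ∀ x ∈ s, ∀ y ∈ s, G.Adj x y ↔ G.Adj x y := fun _ _ _ _ => Iff.rfl
  constructor
  · -- G - v contains H
    exact ⟨Subtype.val ⁻¹' s, G.induce {w : V | w ≠ v}, Relation.ReflTransGen.refl,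
      ⟨nestedInduceIso G G s v hv hGadj⟩⟩
  · -- G / v contains H
    refine ⟨(pivotEdge G u v).induce {w : V | w ≠ v}, Or.inr ⟨u, huv.symm, rfl⟩, ?_⟩
    exact ⟨Subtype.val ⁻¹' s, (pivotEdge G u v).induce {w : V | w ≠ v},
      Relation.ReflTransGen.refl, ⟨nestedInduceIso G (pivotEdge G u v) s v hv hKadj⟩⟩
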